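/- Let a, e be integers with 1 < e < a and r = 2^e − 1. For any integer z with v₂(z) = u ≥ 1, the geometric sum satisfies [2z; r] ≡ 2^e·z (mod 2^{e+u+1}). -/

import Mathlib

open Finset

private lemma pair_sum' (r : ℤ) (z : ℕ) :
    (∑ i ∈ range (2 * z), r ^ i) = (1 + r) * ∑ j ∈ range z, (r ^ 2) ^ j := by
  induction z with
  | zero => simp
  | succ n ih =>
    have h2 : 2 * (n + 1) = (2 * n + 1) + 1 := by ring
    rw [h2, sum_range_succ, sum_range_succ, ih, sum_range_succ]
    ring

private lemma choose_key' (u z k : ℕ) (hz : 2 ^ u ∣ z) (hk1 : 1 ≤ k) (hkz : k ≤ z) :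
    2 ^ (u - k.factorization 2) ∣ z.choose k := by
  have hk0 : k ≠ 0 := by omega
  have hz1 : 1 ≤ z := le_trans hk1 hkz
  have hmain : z * (z - 1).choose (k - 1) = z.choose k * k := by
    have h := Nat.add_one_mul_choose_eq (z - 1) (k - 1)
    rwa [Nat.sub_add_cancel hz1, Nat.sub_add_cancel hk1] at h
  have hdvd : 2 ^ u ∣ z.choose k * k := hmain ▸ Dvd.dvd.mul_right hz _
  set v := k.factorization 2 with hv
  have hksplit : 2 ^ v * (k / 2 ^ v) = k := Nat.ordProj_mul_ordCompl_eq_self k 2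
  have hodd : ¬ 2 ∣ (k / 2 ^ v) := Nat.not_dvd_ordCompl Nat.prime_two hk0
  have hcop : Nat.Coprime (2 ^ u) (k / 2 ^ v) :=
    Nat.Coprime.pow_left _ ((Nat.Prime.coprime_iff_not_dvd Nat.prime_two).mpr hodd)
  have hdvd2 : 2 ^ u ∣ z.choose k * 2 ^ v := by
    apply hcop.dvd_of_dvd_mul_right
    rwa [mul_assoc, hksplit]
  rcases le_or_gt u v with h | h
  · simpa [Nat.sub_eq_zero_of_le h] using one_dvd _
  · have h3 : 2 ^ (u - v) * 2 ^ v ∣ z.choose k * 2 ^ v := by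
      rwa [← pow_add, Nat.sub_add_cancel h.le]
    exact (Nat.mul_dvd_mul_iff_right (Nat.pow_pos (n := v) (by norm_num))).mp h3

private lemma term_key' (u e z k : ℕ) (t : ℤ) (ht : (2:ℤ) ^ (e+1) ∣ t)
    (he : 1 ≤ e) (hz : 2 ^ u ∣ z) (hk : 2 ≤ k) (hkz : k ≤ z) :
    (2:ℤ) ^ (u + e + 2) ∣ t ^ k * (z.choose k : ℤ) := by
  set v := k.factorization 2 with hv
  have hvk : v ≤ k - 1 := by
    have h1 : 2 ^ v ∣ k := Nat.ordProj_dvd k 2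
    have h2 : 2 ^ v ≤ k := Nat.le_of_dvd (by omega) h1
    have h3 : v < 2 ^ v := Nat.lt_two_pow_self
    omega
  have hc : (2:ℤ) ^ (u - v) ∣ (z.choose k : ℤ) := by
    exact_mod_cast Int.natCast_dvd_natCast.mpr (choose_key' u z k hz (by omega) hkz)
  have htk : (2:ℤ) ^ ((e+1) * k) ∣ t ^ k := by
    rw [pow_mul]
    exact pow_dvd_pow_of_dvd ht k
  have hle : u + e + 2 ≤ (e+1) * k + (u - v) := by
    have h4 : (e+1) + k ≤ (e+1) * k := Nat.add_le_mul (by omega) hk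
    omega
  calc (2:ℤ) ^ (u+e+2) ∣ 2 ^ ((e+1)*k + (u - v)) := pow_dvd_pow 2 hle
    _ ∣ t ^ k * (z.choose k : ℤ) := by rw [pow_add]; exact mul_dvd_mul htk hc

private lemma binom_tail' (u e z : ℕ) (t : ℤ) (ht : (2:ℤ)^(e+1) ∣ t) (he : 1 ≤ e)
    (hz : 2 ^ u ∣ z) (hz2 : 2 ≤ z) :
    (2:ℤ) ^ (u + e + 2) ∣ (t + 1) ^ z - 1 - z * t := by
  have hb : (t + 1) ^ z = ∑ k ∈ range (z+1), t ^ k * (z.choose k : ℤ) := by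
    rw [add_pow]; simp
  have key : (2:ℤ)^(u+e+2) ∣ ∑ k ∈ Finset.Ico 2 (z+1), t ^ k * (z.choose k : ℤ) := by
    apply Finset.dvd_sum
    intro k hk
    rw [Finset.mem_Ico] at hk
    exact term_key' u e z k t ht he hz hk.1 (by omega)
  have h1 : (0:ℕ) < z + 1 := by omega
  have h2 : (1:ℕ) < z + 1 := by omega
  have heq : (t+1)^z - 1 - z*t = ∑ k ∈ Finset.Ico 2 (z+1), t^k * (z.choose k : ℤ) := by
    rw [hb, range_eq_Ico, sum_eq_sum_Ico_succ_bot h1, sum_eq_sum_Ico_succ_bot h2]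
    simp only [pow_zero, pow_one, Nat.choose_zero_right, Nat.choose_one_right,
      Nat.cast_one, one_mul]
    ring
  rw [heq]; exact key

/-- For `1 < e < a`, `r = 2^e - 1` and any `z` with `v₂(z) = u ≥ 1`:
`[2z; r] = 1 + r + ⋯ + r^(2z-1) ≡ 2^e * z (mod 2^(e+u+1))`. -/
theorem typeII_geom_sum_congr (a e : ℕ) (he : 1 < e) (hea : e < a) (z u : ℕ) (hu : 1 ≤ u)
    (hval : emultiplicity 2 (z : ℤ) = (u : ℕ∞)) :
    (∑ i ∈ Finset.range (2 * z), ((2 : ℤ) ^ e - 1) ^ i)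
      ≡ 2 ^ e * (z : ℤ) [ZMOD 2 ^ (e + u + 1)] := by
  obtain ⟨f, rfl⟩ : ∃ f, e = f + 2 := ⟨e - 2, by omega⟩
  set e := f + 2
  have hz0 : z ≠ 0 := by
    rintro rfl
    simp [emultiplicity_zero] at hval
  have hzu : (2:ℤ)^u ∣ (z:ℤ) := pow_dvd_of_le_emultiplicity hval.ge
  have hzun : 2 ^ u ∣ z := by exact_mod_cast hzu
  have hz2 : 2 ≤ z := by
    have hd : 2 ^ 1 ∣ z := dvd_trans (pow_dvd_pow 2 hu) hzun
    have := Nat.le_of_dvd (by omega) hd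
    simpa using this
  set r : ℤ := 2 ^ e - 1 with hr
  set s : ℤ := ∑ j ∈ range z, (r^2)^j with hs
  have hpair : (∑ i ∈ range (2*z), r ^ i) = 2 ^ e * s := by
    rw [pair_sum']
    congr 1
    rw [hr]; ring
  have ht : r^2 - 1 = 2^(e+1) * (2^(f+1) - 1) := by
    rw [hr]
    show ((2:ℤ) ^ (f+2) - 1)^2 - 1 = 2^(f+2+1) * (2^(f+1) - 1)
    ring
  have hgeo : (s - z) * (r^2 - 1) = ((r^2 - 1) + 1)^z - 1 - z * (r^2 - 1) := by
    have h1 : s * (r^2 - 1) = (r^2)^z - 1 := geom_sum_mul (r^2) z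
    linear_combination h1
  have hdvd1 : (2:ℤ)^(u+e+2) ∣ (s - z) * (r^2 - 1) := by
    rw [hgeo]
    exact binom_tail' u e z (r^2-1) (ht ▸ dvd_mul_right _ _) (by omega) hzun hz2
  have hmodd : ¬ (2:ℤ) ∣ (2^(f+1) - 1) := by
    intro h
    have h2 : (2:ℤ) ∣ 2^(f+1) := dvd_pow_self 2 (by omega)
    have : (2:ℤ) ∣ 1 := by
      have := dvd_sub h2 h
      simpa using this
    norm_num at this
  have hdvd2 : (2:ℤ)^(u+1) ∣ (s - z) := by
    rw [ht] at hdvd1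
    have h3 : (2:ℤ)^(u+1) * 2^(e+1) ∣ ((s - z) * (2^(f+1) - 1)) * 2^(e+1) := by
      rw [← pow_add]
      have : u + 1 + (e + 1) = u + e + 2 := by omega
      rw [this]
      calc (2:ℤ)^(u+e+2) ∣ (s - z) * (2^(e+1) * (2^(f+1) - 1)) := hdvd1
        _ = ((s - z) * (2^(f+1) - 1)) * 2^(e+1) := by ring
    have h4 : (2:ℤ)^(u+1) ∣ (s - z) * (2^(f+1) - 1) :=
      (mul_dvd_mul_iff_right (by positivity : (2:ℤ)^(e+1) ≠ 0)).mp h3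
    exact Int.prime_two.pow_dvd_of_dvd_mul_right _ hmodd h4
  have hfin : (2:ℤ)^(e+u+1) ∣ (2^e * (z:ℤ) - 2^e * s) := by
    have heq2 : (2:ℤ)^(e+u+1) = 2^e * 2^(u+1) := by
      rw [show e+u+1 = e+(u+1) by omega, pow_add]
    rw [heq2, ← mul_sub]
    exact mul_dvd_mul_left _ (by simpa using (dvd_neg.mpr hdvd2))
  rw [hpair]
  exact Int.modEq_iff_dvd.mpr hfin
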